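/- Let E_+ and E_- be finite dimensional vector spaces over a field F of the same dimension, and let α be an odd exact endomorphism of E = E_+ ⊕ E_- with components α_+ : E_+ → E_- and α_- : E_- → E_+ (i.e. Ker(α_+) = Im(α_-) and Ker(α_-) = Im(α_+)). If α_-^† and α_-^* are two pseudo-inverses of α_-, then the linear maps α_+ + α_-^† and α_+ + α_-^* from E_+ to E_- are both isomorphisms and induce the same map det(E_+) → det(E_-) on top exterior powers. -/

import Mathlib

open Module

/-- `g` is a pseudo-inverse of the linear map `β`. -/
def IsPseudoInverse {F : Type} [Field F] {M N : Type} [AddCommGroup M] [Module F M]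
    [AddCommGroup N] [Module F N] (β : M →ₗ[F] N) (g : N →ₗ[F] M) : Prop :=
  β ∘ₗ g ∘ₗ β = β ∧ g ∘ₗ β ∘ₗ g = g

section Aux

variable {F M N ι : Type*} [Field F] [AddCommGroup M] [Module F M]
  [AddCommGroup N] [Module F N]

open Function

/-- If one slot of an alternating map contains a vector in the span of the values of the
other slots indexed by `S`, the result is zero. -/
lemma aux_update_span [DecidableEq ι] (f : M [⋀^ι]→ₗ[F] N) (u : ι → M) (a : ι) (S : Set ι)
    (hS : a ∉ S) {x : M} (hx : x ∈ Submodule.span F (u '' S)) :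
    f (update u a x) = 0 := by
  induction hx using Submodule.span_induction with
  | mem y hy =>
      obtain ⟨j, hj, rfl⟩ := hy
      have hja : a ≠ j := fun h => hS (h ▸ hj)
      refine f.map_eq_zero_of_eq _ (i := a) (j := j) ?_ hja
      rw [update_self, update_of_ne (Ne.symm hja)]
  | zero => exact f.map_coord_zero a (update_self a 0 u)
  | add x y _ _ hx hy => rw [f.map_update_add, hx, hy, add_zero]
  | smul c x _ hx => rw [f.map_update_smul, hx, smul_zero]

/-- An alternating map is unchanged if we modify the arguments outside a set `S` by adding
vectors in the span of the arguments inside `S`. Version with an explicit finset of modified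
indices, for induction. -/
lemma aux_alt_congr_finset [Fintype ι] [DecidableEq ι] (f : M [⋀^ι]→ₗ[F] N) (v : ι → M)
    (S : Set ι) (U : Finset ι) (hUS : ∀ i ∈ U, i ∉ S) :
    ∀ w : ι → M, (∀ i, i ∉ U → w i = v i) →
      (∀ i, w i - v i ∈ Submodule.span F (v '' S)) → f w = f v := by
  induction U using Finset.induction_on with
  | empty =>
      intro w hw _
      have : w = v := funext fun i => hw i (Finset.notMem_empty i)
      rw [this]
  | @insert a U' ha ih =>
      intro w hw hspan
      have haS : a ∉ S := hUS a (Finset.mem_insert_self a U')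
      have hUS' : ∀ i ∈ U', i ∉ S := fun i hi => hUS i (Finset.mem_insert_of_mem hi)
      set w' := Function.update w a (v a) with hw'def
      have hw'1 : ∀ i, i ∉ U' → w' i = v i := by
        intro i hi
        by_cases h : i = a
        · subst h; simp [hw'def]
        · rw [hw'def, Function.update_of_ne h]
          exact hw i (by simp [h, hi])
      have hw'2 : ∀ i, w' i - v i ∈ Submodule.span F (v '' S) := by
        intro i
        by_cases h : i = a
        · subst h; simp [hw'def]
        · rw [hw'def, Function.update_of_ne h]; exact hspan i
      have h1 : f w' = f v := ih hUS' w' hw'1 hw'2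
      have h2 : Function.update w' a (w a) = w := by
        funext i
        by_cases h : i = a
        · subst h; simp
        · simp [hw'def, Function.update_of_ne h]
      have himg : w' '' S = v '' S := by
        apply Set.image_congr
        intro j hj
        exact hw'1 j (fun hjU => hUS' j hjU hj)
      have hzero : f (Function.update w' a (w a - v a)) = 0 := by
        refine aux_update_span f w' a S haS ?_
        rw [himg]; exact hspan a
      have h3 : w a = v a + (w a - v a) := by abel
      calc f w = f (Function.update w' a (v a + (w a - v a))) := by rw [← h3, h2]
        _ = f (Function.update w' a (v a)) + f (Function.update w' a (w a - v a)) :=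
            f.map_update_add w' a (v a) (w a - v a)
        _ = f w' + 0 := by
            rw [hzero]
            congr 1
            have : w' a = v a := by simp [hw'def]
            rw [← this, Function.update_eq_self]
        _ = f v := by rw [h1, add_zero]

/-- An alternating map is unchanged if we modify the arguments outside a set `S` by adding
vectors in the span of the arguments inside `S`. -/
lemma aux_alt_congr [Fintype ι] [DecidableEq ι] (f : M [⋀^ι]→ₗ[F] N) (v w : ι → M)
    (S : Set ι) (hS : ∀ i ∈ S, w i = v i)
    (hspan : ∀ i, w i - v i ∈ Submodule.span F (v '' S)) : f w = f v := by
  classical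
  refine aux_alt_congr_finset f v S (Finset.univ.filter (¬ · ∈ S)) ?_ w ?_ hspan
  · intro i hi
    simpa using (Finset.mem_filter.mp hi).2
  · intro i hi
    have : i ∈ S := by
      by_contra h
      exact hi (Finset.mem_filter.mpr ⟨Finset.mem_univ i, h⟩)
    exact hS i this

end Aux

/-- `αp + g` is bijective for any pseudo-inverse `g` of `αm`. -/
lemma aux_bij {F : Type} [Field F] {Ep Em : Type} [AddCommGroup Ep] [Module F Ep]
    [AddCommGroup Em] [Module F Em] [FiniteDimensional F Ep] [FiniteDimensional F Em]
    (hdim : finrank F Ep = finrank F Em)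
    (αp : Ep →ₗ[F] Em) (αm : Em →ₗ[F] Ep)
    (hex1 : LinearMap.ker αp = LinearMap.range αm)
    (hex2 : LinearMap.ker αm = LinearMap.range αp)
    (g : Ep →ₗ[F] Em) (hg : IsPseudoInverse αm g) :
    Function.Bijective (αp + g) := by
  obtain ⟨h1, h2⟩ := hg
  have hinj : Function.Injective (αp + g) := by
    rw [← LinearMap.ker_eq_bot, LinearMap.ker_eq_bot']
    intro x hx
    rw [LinearMap.add_apply] at hx
    have hαmαp : αm (αp x) = 0 := by
      have : αp x ∈ LinearMap.ker αm := by
        rw [hex2]; exact LinearMap.mem_range_self αp x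
      exact this
    have hαmg : αm (g x) = 0 := by
      have := congrArg αm hx
      rw [map_add, map_zero, hαmαp, zero_add] at this
      exact this
    have hgx : g x = 0 := by
      have h2x : g (αm (g x)) = g x := by
        simpa using LinearMap.ext_iff.mp h2 x
      rw [← h2x, hαmg, map_zero]
    have hαpx : αp x = 0 := by rwa [hgx, add_zero] at hx
    have hxK : x ∈ LinearMap.range αm := by
      rw [← hex1]; exact hαpx
    obtain ⟨y, rfl⟩ := hxK
    have h1y : αm (g (αm y)) = αm y := by
      simpa using LinearMap.ext_iff.mp h1 y
    rw [← h1y, hgx, map_zero]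
  exact ⟨hinj, (LinearMap.injective_iff_surjective_of_finrank_eq_finrank hdim).mp hinj⟩

set_option maxHeartbeats 1000000 in
/-- If `α` is an odd exact endomorphism of `E = E₊ ⊕ E₋` (components
`α₊ : E₊ → E₋`, `α₋ : E₋ → E₊` with `Ker α₊ = Im α₋` and `Ker α₋ = Im α₊`), and
`g₁, g₂` are two pseudo-inverses of `α₋`, then `α₊ + g₁` and `α₊ + g₂` are both
isomorphisms and they induce the same map on top exterior powers
`det(E₊) → det(E₋)`. -/
theorem torsion_independent_of_pseudoinverse
    {F : Type} [Field F] {Ep Em : Type} [AddCommGroup Ep] [Module F Ep]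
    [AddCommGroup Em] [Module F Em] [FiniteDimensional F Ep] [FiniteDimensional F Em]
    (hdim : finrank F Ep = finrank F Em)
    (αp : Ep →ₗ[F] Em) (αm : Em →ₗ[F] Ep)
    (hex1 : LinearMap.ker αp = LinearMap.range αm)
    (hex2 : LinearMap.ker αm = LinearMap.range αp)
    (g1 g2 : Ep →ₗ[F] Em)
    (hg1 : IsPseudoInverse αm g1) (hg2 : IsPseudoInverse αm g2) :
    Function.Bijective (αp + g1) ∧ Function.Bijective (αp + g2) ∧
      ∀ x ∈ (⋀[F]^(finrank F Ep) Ep : Submodule F (ExteriorAlgebra F Ep)),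
        ExteriorAlgebra.map (αp + g1) x = ExteriorAlgebra.map (αp + g2) x := by
  classical
  refine ⟨aux_bij hdim αp αm hex1 hex2 g1 hg1, aux_bij hdim αp αm hex1 hex2 g2 hg2, ?_⟩
  set n := finrank F Ep with hn
  set K := LinearMap.ker αp with hKdef
  obtain ⟨W, hWc⟩ := Submodule.exists_isCompl K
  set r := finrank F W with hr
  set m := finrank F K with hm
  have hrm : r + m = n := by
    have := Submodule.finrank_add_eq_of_isCompl hWc
    omega
  set bW := finBasis F W with hbWdef
  set bK := finBasis F K with hbKdef
  set e : (W × K) ≃ₗ[F] Ep := Submodule.prodEquivOfIsCompl W K hWc.symm with hedef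
  set b : Basis (Fin r ⊕ Fin m) F Ep := (bW.prod bK).map e with hbdef
  have hbl : ∀ i, b (Sum.inl i) = (bW i : Ep) := by
    intro i
    simp [hbdef, hedef, Basis.prod_apply, Submodule.coe_prodEquivOfIsCompl']
  have hbr : ∀ j, b (Sum.inr j) = (bK j : Ep) := by
    intro j
    simp [hbdef, hedef, Basis.prod_apply, Submodule.coe_prodEquivOfIsCompl']
  -- span descriptions
  have hKspan : (K : Submodule F Ep) = Submodule.span F (Set.range fun j => (bK j : Ep)) := by
    conv_lhs => rw [← Submodule.map_subtype_top K]
    rw [← bK.span_eq, Submodule.map_span, ← Set.range_comp]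
    rfl
  have hWspan : (W : Submodule F Ep) = Submodule.span F (Set.range fun i => (bW i : Ep)) := by
    conv_lhs => rw [← Submodule.map_subtype_top W]
    rw [← bW.span_eq, Submodule.map_span, ← Set.range_comp]
    rfl
  -- fact A : for a pseudo-inverse g, all values of g lie in span of the g (bK j)
  have factA : ∀ (g : Ep →ₗ[F] Em), (g ∘ₗ αm ∘ₗ g = g) → ∀ x : Ep,
      g x ∈ Submodule.span F (Set.range fun j => g (bK j : Ep)) := by
    intro g hgg x
    have h1 : g x = g (αm (g x)) := by
      simpa using (LinearMap.ext_iff.mp hgg x).symm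
    have h2 : αm (g x) ∈ Submodule.span F (Set.range fun j => (bK j : Ep)) := by
      rw [← hKspan, hex1]
      exact LinearMap.mem_range_self _ _
    have h3 := Submodule.mem_map_of_mem (f := g) h2
    rw [Submodule.map_span, ← Set.range_comp] at h3
    rw [h1]
    exact h3
  -- range of αp as span
  have hrange : LinearMap.range αp = Submodule.span F (Set.range fun i => αp (bW i : Ep)) := by
    have htop : K ⊔ W = ⊤ := hWc.codisjoint.eq_top
    have h1 : LinearMap.range αp = Submodule.map αp (K ⊔ W) := by
      rw [htop, Submodule.map_top]
    have h2 : Submodule.map αp K = ⊥ := by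
      rw [eq_bot_iff]
      rintro x ⟨y, hy, rfl⟩
      simpa using LinearMap.mem_ker.mp hy
    have h3 : Submodule.map αp W = Submodule.span F (Set.range fun i => αp (bW i : Ep)) := by
      conv_lhs => rw [hWspan]
      rw [Submodule.map_span, ← Set.range_comp]
      rfl
    rw [h1, Submodule.map_sup, h2, bot_sup_eq, h3]
  -- fact B
  have factB : ∀ j, g2 (bK j : Ep) - g1 (bK j : Ep) ∈ LinearMap.range αp := by
    intro j
    rw [← hex2, LinearMap.mem_ker]
    have hmem : (bK j : Ep) ∈ LinearMap.range αm := by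
      rw [← hex1]
      exact (bK j).2
    obtain ⟨y, hy⟩ := hmem
    have e1 : αm (g1 (bK j : Ep)) = αm y := by
      rw [← hy]
      simpa using LinearMap.ext_iff.mp hg1.1 y
    have e2 : αm (g2 (bK j : Ep)) = αm y := by
      rw [← hy]
      simpa using LinearMap.ext_iff.mp hg2.1 y
    rw [map_sub, e1, e2, sub_self]
  -- vanishing of αp on K
  have hαpK : ∀ j, αp (bK j : Ep) = 0 := fun j => (bK j).2
  -- the key alternating map equality
  set f0 : Em [⋀^Fin n]→ₗ[F] ExteriorAlgebra F Em := ExteriorAlgebra.ιMulti F n with hf0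
  have key : f0.compLinearMap (αp + g1) = f0.compLinearMap (αp + g2) := by
    apply b.ext_alternating
    intro v hv
    have hvb : Function.Bijective v :=
      (Fintype.bijective_iff_injective_and_card v).mpr ⟨hv, by simp [hrm]⟩
    set vA : Fin n → Em := fun i => (αp + g1) (b (v i)) with hvA
    set vB : Fin n → Em := fun i => (αp + g2) (b (v i)) with hvB
    set vC : Fin n → Em :=
      fun i => Sum.elim (fun j => αp (bW j : Ep)) (fun j => g1 (bK j : Ep)) (v i) with hvC
    set vD : Fin n → Em :=
      fun i => Sum.elim (fun j => αp (bW j : Ep)) (fun j => g2 (bK j : Ep)) (v i) with hvD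
    set S₁ : Set (Fin n) := v ⁻¹' (Set.range Sum.inr) with hS₁
    set S₂ : Set (Fin n) := v ⁻¹' (Set.range Sum.inl) with hS₂
    have himg1 : vC '' S₁ = Set.range fun j => g1 (bK j : Ep) := by
      apply Set.eq_of_subset_of_subset
      · rintro x ⟨i, hi, rfl⟩
        obtain ⟨j, hj⟩ := hi
        exact ⟨j, by simp [hvC, ← hj]⟩
      · rintro x ⟨j, rfl⟩
        obtain ⟨i, hi⟩ := hvb.2 (Sum.inr j)
        exact ⟨i, by simp [hS₁, hi], by simp [hvC, hi]⟩
    have himg1' : vD '' S₁ = Set.range fun j => g2 (bK j : Ep) := by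
      apply Set.eq_of_subset_of_subset
      · rintro x ⟨i, hi, rfl⟩
        obtain ⟨j, hj⟩ := hi
        exact ⟨j, by simp [hvD, ← hj]⟩
      · rintro x ⟨j, rfl⟩
        obtain ⟨i, hi⟩ := hvb.2 (Sum.inr j)
        exact ⟨i, by simp [hS₁, hi], by simp [hvD, hi]⟩
    have himg2 : vC '' S₂ = Set.range fun j => αp (bW j : Ep) := by
      apply Set.eq_of_subset_of_subset
      · rintro x ⟨i, hi, rfl⟩
        obtain ⟨j, hj⟩ := hi
        exact ⟨j, by simp [hvC, ← hj]⟩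
      · rintro x ⟨j, rfl⟩
        obtain ⟨i, hi⟩ := hvb.2 (Sum.inl j)
        exact ⟨i, by simp [hS₂, hi], by simp [hvC, hi]⟩
    have step1 : f0 vA = f0 vC := by
      refine aux_alt_congr f0 vC vA S₁ ?_ ?_
      · rintro i ⟨j, hj⟩
        simp [hvA, hvC, ← hj, hbr, hαpK]
      · intro i
        rw [himg1]
        cases hvi : v i with
        | inl j =>
          have hd : vA i - vC i = g1 (bW j : Ep) := by
            simp [hvA, hvC, hvi, hbl]
          rw [hd]
          exact factA g1 hg1.2 _
        | inr j =>
          have hd : vA i - vC i = 0 := by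
            simp [hvA, hvC, hvi, hbr, hαpK]
          rw [hd]
          exact Submodule.zero_mem _
    have step2 : f0 vB = f0 vD := by
      refine aux_alt_congr f0 vD vB S₁ ?_ ?_
      · rintro i ⟨j, hj⟩
        simp [hvB, hvD, ← hj, hbr, hαpK]
      · intro i
        rw [himg1']
        cases hvi : v i with
        | inl j =>
          have hd : vB i - vD i = g2 (bW j : Ep) := by
            simp [hvB, hvD, hvi, hbl]
          rw [hd]
          exact factA g2 hg2.2 _
        | inr j =>
          have hd : vB i - vD i = 0 := by
            simp [hvB, hvD, hvi, hbr, hαpK]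
          rw [hd]
          exact Submodule.zero_mem _
    have step3 : f0 vD = f0 vC := by
      refine aux_alt_congr f0 vC vD S₂ ?_ ?_
      · rintro i ⟨j, hj⟩
        simp [hvD, hvC, ← hj]
      · intro i
        rw [himg2, ← hrange]
        cases hvi : v i with
        | inl j =>
          have hd : vD i - vC i = 0 := by
            simp [hvD, hvC, hvi]
          rw [hd]
          exact Submodule.zero_mem _
        | inr j =>
          have hd : vD i - vC i = g2 (bK j : Ep) - g1 (bK j : Ep) := by
            simp [hvD, hvC, hvi]
          rw [hd]
          exact factB j
    calc f0.compLinearMap (αp + g1) (fun i => b (v i)) = f0 vA := rfl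
      _ = f0 vC := step1
      _ = f0 vD := step3.symm
      _ = f0 vB := step2.symm
      _ = f0.compLinearMap (αp + g2) (fun i => b (v i)) := rfl
  -- conclude
  intro x hx
  rw [← ExteriorAlgebra.ιMulti_span_fixedDegree] at hx
  induction hx using Submodule.span_induction with
  | mem y hy =>
      obtain ⟨mv, rfl⟩ := hy
      rw [ExteriorAlgebra.map_apply_ιMulti, ExteriorAlgebra.map_apply_ιMulti]
      have h := AlternatingMap.congr_fun key mv
      rw [AlternatingMap.compLinearMap_apply, AlternatingMap.compLinearMap_apply, hf0] at h
      rw [Function.comp_def, Function.comp_def]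
      exact h
  | zero => simp
  | add x y _ _ ihx ihy => rw [map_add, map_add, ihx, ihy]
  | smul c x _ ih => rw [map_smul, map_smul, ih]
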